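/- For all real numbers β₁, β₂ with 0 < β₁ < β₂, the derivative F'_{β₁,β₂}(x) = β₁ − (β₁ + x·β₂·(β₁+β₂))·exp(−x·(β₁+β₂)) vanishes at exactly one positive point x₀, and F_{β₁,β₂}(x₀) < 0; moreover F'_{β₁,β₂}(x) → β₁ as x → ∞. -/

import Mathlib

/-- Hamilton football angle function: `F β₁ β₂ x = β₁x − 1 + (β₂x + 1) e^{−x(β₁+β₂)}`. -/
noncomputable def F (β₁ β₂ x : ℝ) : ℝ :=
  β₁ * x - 1 + (β₂ * x + 1) * Real.exp (-x * (β₁ + β₂))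

/-- Auxiliary function `G β₁ β₂ x = (β₁ + xβ₂(β₁+β₂)) e^{−x(β₁+β₂)}`, so that
`(F β₁ β₂)' = β₁ - G β₁ β₂`. -/
noncomputable def G (β₁ β₂ x : ℝ) : ℝ :=
  (β₁ + x * β₂ * (β₁ + β₂)) * Real.exp (-x * (β₁ + β₂))

lemma hasDerivAt_exp_aux (β₁ β₂ x : ℝ) :
    HasDerivAt (fun y : ℝ => Real.exp (-y * (β₁ + β₂)))
      (-(β₁ + β₂) * Real.exp (-x * (β₁ + β₂))) x := by
  have h : HasDerivAt (fun y : ℝ => -y * (β₁ + β₂)) (-(β₁ + β₂)) x := by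
    simpa using (hasDerivAt_id x).neg.mul_const (β₁ + β₂)
  simpa [mul_comm] using h.exp

lemma hasDerivAt_F (β₁ β₂ x : ℝ) :
    HasDerivAt (F β₁ β₂)
      (β₁ - (β₁ + x * β₂ * (β₁ + β₂)) * Real.exp (-x * (β₁ + β₂))) x := by
  have h1 : HasDerivAt (fun y : ℝ => β₁ * y - 1) β₁ x := by
    simpa using ((hasDerivAt_id x).const_mul β₁).sub_const 1
  have h2 : HasDerivAt (fun y : ℝ => β₂ * y + 1) β₂ x := by
    simpa using ((hasDerivAt_id x).const_mul β₂).add_const 1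
  have h := h1.add (h2.mul (hasDerivAt_exp_aux β₁ β₂ x))
  refine h.congr_deriv ?_
  ring

lemma hasDerivAt_G (β₁ β₂ x : ℝ) :
    HasDerivAt (G β₁ β₂)
      ((β₁ + β₂) * (β₂ - β₁ - x * β₂ * (β₁ + β₂)) * Real.exp (-x * (β₁ + β₂))) x := by
  have hl : HasDerivAt (fun y : ℝ => β₁ + y * β₂ * (β₁ + β₂)) (β₂ * (β₁ + β₂)) x := by
    simpa using (((hasDerivAt_id x).mul_const β₂).mul_const (β₁ + β₂)).const_add β₁
  have h := hl.mul (hasDerivAt_exp_aux β₁ β₂ x)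
  refine h.congr_deriv ?_
  ring

lemma deriv_F (β₁ β₂ x : ℝ) : deriv (F β₁ β₂) x = β₁ - G β₁ β₂ x :=
  (hasDerivAt_F β₁ β₂ x).deriv

lemma continuous_G (β₁ β₂ : ℝ) : Continuous (G β₁ β₂) := by
  unfold G; fun_prop

lemma tendsto_G (β₁ β₂ : ℝ) (hs : 0 < β₁ + β₂) :
    Filter.Tendsto (G β₁ β₂) Filter.atTop (nhds 0) := by
  have h1 : Filter.Tendsto (fun x : ℝ => x * (β₁ + β₂)) Filter.atTop Filter.atTop :=
    Filter.tendsto_id.atTop_mul_const hs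
  have h2 : Filter.Tendsto
      (fun t : ℝ => β₁ * Real.exp (-t) + β₂ * (t * Real.exp (-t)))
      Filter.atTop (nhds (β₁ * 0 + β₂ * 0)) := by
    refine Filter.Tendsto.add ?_ ?_
    · exact (Real.tendsto_exp_neg_atTop_nhds_zero).const_mul β₁
    · have := Real.tendsto_pow_mul_exp_neg_atTop_nhds_zero 1
      simpa using this.const_mul β₂
  have h2' : Filter.Tendsto
      (fun t : ℝ => β₁ * Real.exp (-t) + β₂ * (t * Real.exp (-t)))
      Filter.atTop (nhds 0) := by simpa using h2
  have h3 := h2'.comp h1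
  refine h3.congr fun x => ?_
  simp only [Function.comp, G, neg_mul]
  ring

/-- The derivative `F'_{β₁,β₂}(x) = β₁ − (β₁ + xβ₂(β₁+β₂)) e^{−x(β₁+β₂)}` vanishes at
exactly one positive point `x₀`, at which `F_{β₁,β₂}(x₀) < 0`; moreover `F' → β₁` at `∞`. -/
theorem first_derivative_critical_point (β₁ β₂ : ℝ) (h₁ : 0 < β₁) (h₂ : β₁ < β₂) :
    (∀ x : ℝ, deriv (F β₁ β₂) x =
      β₁ - (β₁ + x * β₂ * (β₁ + β₂)) * Real.exp (-x * (β₁ + β₂))) ∧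
    (∃! x₀ : ℝ, 0 < x₀ ∧ deriv (F β₁ β₂) x₀ = 0) ∧
    (∀ x₀ : ℝ, 0 < x₀ → deriv (F β₁ β₂) x₀ = 0 → F β₁ β₂ x₀ < 0) ∧
    Filter.Tendsto (deriv (F β₁ β₂)) Filter.atTop (nhds β₁) := by
  have hs : 0 < β₁ + β₂ := by linarith
  have hb2 : 0 < β₂ := by linarith
  have hb2s : 0 < β₂ * (β₁ + β₂) := mul_pos hb2 hs
  set c : ℝ := (β₂ - β₁) / (β₂ * (β₁ + β₂)) with hc_def
  have hc : 0 < c := div_pos (by linarith) hb2s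
  have hGcont := continuous_G β₁ β₂
  -- G is strictly monotone on [0, c]
  have hmono : StrictMonoOn (G β₁ β₂) (Set.Icc 0 c) := by
    apply strictMonoOn_of_deriv_pos (convex_Icc 0 c) hGcont.continuousOn
    intro x hx
    rw [interior_Icc, Set.mem_Ioo] at hx
    rw [(hasDerivAt_G β₁ β₂ x).deriv]
    have hlt : x * β₂ * (β₁ + β₂) < β₂ - β₁ := by
      have := (lt_div_iff₀ hb2s).mp hx.2
      linarith [this]
    exact mul_pos (mul_pos hs (by linarith)) (Real.exp_pos _)
  -- G is strictly antitone on [c, ∞)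
  have hanti : StrictAntiOn (G β₁ β₂) (Set.Ici c) := by
    apply strictAntiOn_of_deriv_neg (convex_Ici c) hGcont.continuousOn
    intro x hx
    rw [interior_Ici, Set.mem_Ioi] at hx
    rw [(hasDerivAt_G β₁ β₂ x).deriv]
    have hlt : β₂ - β₁ < x * β₂ * (β₁ + β₂) := by
      have := (div_lt_iff₀ hb2s).mp hx
      linarith [this]
    have : (β₁ + β₂) * (β₂ - β₁ - x * β₂ * (β₁ + β₂)) < 0 :=
      mul_neg_of_pos_of_neg hs (by linarith)
    exact mul_neg_of_neg_of_pos this (Real.exp_pos _)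
  have hG0 : G β₁ β₂ 0 = β₁ := by simp [G]
  -- G > β₁ on (0, c]
  have hgt : ∀ x : ℝ, 0 < x → x ≤ c → β₁ < G β₁ β₂ x := by
    intro x hx0 hxc
    have := hmono (Set.mem_Icc.mpr ⟨le_refl 0, hc.le⟩) (Set.mem_Icc.mpr ⟨hx0.le, hxc⟩) hx0
    rwa [hG0] at this
  -- any positive root of deriv F lies strictly beyond c
  have hroot_gt : ∀ x : ℝ, 0 < x → deriv (F β₁ β₂) x = 0 → c < x ∧ G β₁ β₂ x = β₁ := by
    intro x hx0 hx
    rw [deriv_F] at hx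
    have hGx : G β₁ β₂ x = β₁ := by linarith
    refine ⟨?_, hGx⟩
    by_contra h
    push_neg at h
    exact absurd hGx (ne_of_gt (hgt x hx0 h))
  -- existence
  have hT : ∃ T : ℝ, c < T ∧ G β₁ β₂ T < β₁ := by
    have hev : ∀ᶠ x in Filter.atTop, G β₁ β₂ x < β₁ :=
      (tendsto_G β₁ β₂ hs).eventually_lt_const h₁
    rcases (hev.and (Filter.eventually_gt_atTop c)).exists with ⟨T, hT1, hT2⟩
    exact ⟨T, hT2, hT1⟩
  obtain ⟨T, hcT, hGT⟩ := hT
  have hivt : β₁ ∈ G β₁ β₂ '' Set.Icc c T := by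
    apply intermediate_value_Icc' hcT.le hGcont.continuousOn
    exact Set.mem_Icc.mpr ⟨hGT.le, (hgt c hc le_rfl).le⟩
  obtain ⟨x₀, hx₀mem, hGx₀⟩ := hivt
  have hx₀pos : 0 < x₀ := lt_of_lt_of_le hc hx₀mem.1
  have hx₀root : deriv (F β₁ β₂) x₀ = 0 := by rw [deriv_F, hGx₀]; ring
  refine ⟨fun x => (hasDerivAt_F β₁ β₂ x).deriv, ?_, ?_, ?_⟩
  · -- unique critical point
    refine ⟨x₀, ⟨hx₀pos, hx₀root⟩, ?_⟩
    intro y ⟨hy0, hy⟩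
    obtain ⟨hcy, hGy⟩ := hroot_gt y hy0 hy
    obtain ⟨hcx₀, hGx₀'⟩ := hroot_gt x₀ hx₀pos hx₀root
    exact hanti.injOn hcy.le hcx₀.le (hGy.trans hGx₀'.symm)
  · -- F negative at any positive critical point
    intro z hz0 hz
    obtain ⟨hcz, hGz⟩ := hroot_gt z hz0 hz
    have hFanti : StrictAntiOn (F β₁ β₂) (Set.Icc 0 z) := by
      apply strictAntiOn_of_deriv_neg (convex_Icc 0 z)
      · have : Continuous (F β₁ β₂) := by unfold F; fun_prop
        exact this.continuousOn
      · intro x hx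
        rw [interior_Icc, Set.mem_Ioo] at hx
        rw [deriv_F]
        have : β₁ < G β₁ β₂ x := by
          rcases le_or_gt x c with h | h
          · exact hgt x hx.1 h
          · have := hanti (le_of_lt h) hcz.le hx.2
            rwa [hGz] at this
        linarith
    have := hFanti (Set.mem_Icc.mpr ⟨le_refl 0, hz0.le⟩) (Set.mem_Icc.mpr ⟨hz0.le, le_rfl⟩) hz0
    have hF0 : F β₁ β₂ 0 = 0 := by simp [F]
    linarith [this, hF0.symm ▸ this]
  · -- limit at infinity
    have h := (tendsto_const_nhds (x := β₁) (f := Filter.atTop (α := ℝ))).sub (tendsto_G β₁ β₂ hs)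
    simp only [sub_zero] at h
    exact h.congr fun x => (deriv_F β₁ β₂ x).symm
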